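/- Let σ > 0 and β > 0, and let μ be the Gaussian measure on ℝ with mean 0 and variance σ², whose density is φ_σ(w) = exp(−w²/(2σ²))/(σ√(2π)). Then φ_σ(−β) ≤ (β/σ² + 1/β + 1/(βσ²) + 1/β³) · μ((−∞, −β]). Consequently, for all a ≤ b ≤ −β one has μ((a, b]) ≤ (β/σ² + 1/β + 1/(βσ²) + 1/β³) · μ((−∞, −β]) · (b − a). (Lemma 4.5: the local Lipschitz constant of the Gaussian CDF on (−∞, −β] is bounded by an explicit constant times the probability of failure P_f = μ((−∞, −β]).) -/

import Mathlib

set_option maxHeartbeats 1000000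

open MeasureTheory ProbabilityTheory Set Real Filter

lemma aux_hasDerivAt (σ : ℝ) (hσ : 0 < σ) {x : ℝ} (hx : x ≠ 0) :
    HasDerivAt (fun t : ℝ => σ ^ 2 * t⁻¹ * ((Real.sqrt (2 * Real.pi * σ ^ 2))⁻¹ *
        Real.exp (-(t - 0) ^ 2 / (2 * σ ^ 2))))
      (-(1 + σ ^ 2 / x ^ 2) * ((Real.sqrt (2 * Real.pi * σ ^ 2))⁻¹ *
        Real.exp (-(x - 0) ^ 2 / (2 * σ ^ 2)))) x := by
  have hσ2 : (σ:ℝ) ^ 2 ≠ 0 := by positivity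
  have h1 : HasDerivAt (fun t : ℝ => σ ^ 2 * t⁻¹) (σ ^ 2 * (-(x ^ 2)⁻¹)) x :=
    (hasDerivAt_inv hx).const_mul _
  have h2 : HasDerivAt (fun t : ℝ => -(t - 0) ^ 2 / (2 * σ ^ 2)) (-x / σ ^ 2) x := by
    have : HasDerivAt (fun t : ℝ => -(t - 0) ^ 2 / (2 * σ ^ 2))
        (-(2 * (x - 0) ^ 1 * 1) / (2 * σ ^ 2)) x :=
      (((hasDerivAt_id x).sub_const 0).pow 2).neg.div_const _
    convert this using 1
    field_simp; ring
  have h4 := (h2.exp).const_mul ((Real.sqrt (2 * Real.pi * σ ^ 2))⁻¹)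
  have h5 := h1.mul h4
  refine h5.congr_deriv ?_
  field_simp
  ring

/-- Lemma 4.5: the density `φ_σ(-β)` of the centred Gaussian measure with variance `σ²`
is bounded by an explicit constant times the probability of failure `μ((-∞, -β])`;
consequently, the local Lipschitz constant of the Gaussian CDF on `(-∞, -β]` is bounded
by that constant times the probability of failure. -/
theorem lipschitz_constant_bound (σ β : ℝ) (hσ : 0 < σ) (hβ : 0 < β) :
    Real.exp (-β ^ 2 / (2 * σ ^ 2)) / (σ * Real.sqrt (2 * Real.pi)) ≤
      (β / σ ^ 2 + 1 / β + 1 / (β * σ ^ 2) + 1 / β ^ 3) *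
        ((gaussianReal 0 ⟨σ ^ 2, sq_nonneg σ⟩) (Set.Iic (-β))).toReal ∧
    ∀ a b : ℝ, a ≤ b → b ≤ -β →
      ((gaussianReal 0 ⟨σ ^ 2, sq_nonneg σ⟩) (Set.Ioc a b)).toReal ≤
        (β / σ ^ 2 + 1 / β + 1 / (β * σ ^ 2) + 1 / β ^ 3) *
          ((gaussianReal 0 ⟨σ ^ 2, sq_nonneg σ⟩) (Set.Iic (-β))).toReal * (b - a) := by
  set v : NNReal := ⟨σ ^ 2, sq_nonneg σ⟩ with hv
  have hσ2 : (0:ℝ) < σ ^ 2 := by positivity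
  have hv0 : v ≠ 0 := fun h => by
    exact hσ2.ne' (congrArg NNReal.toReal h)
  set f : ℝ → ℝ := gaussianPDFReal 0 v with hf
  have hfeq : ∀ x, f x = (Real.sqrt (2 * Real.pi * σ ^ 2))⁻¹ *
      Real.exp (-(x - 0) ^ 2 / (2 * σ ^ 2)) := fun x => rfl
  have hfnn : ∀ x, 0 ≤ f x := gaussianPDFReal_nonneg 0 v
  have hfint : Integrable f := integrable_gaussianPDFReal 0 v
  -- value at -β
  have hfβ : f (-β) = Real.exp (-β ^ 2 / (2 * σ ^ 2)) / (σ * Real.sqrt (2 * Real.pi)) := by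
    rw [hfeq, show (2 * Real.pi * σ ^ 2) = (2 * Real.pi) * σ ^ 2 by ring,
      Real.sqrt_mul (by positivity), Real.sqrt_sq hσ.le,
      show (-β - 0 : ℝ) = -β by ring, neg_sq]
    rw [div_eq_mul_inv, mul_comm σ]
    ring
  -- monotonicity: f x ≤ f (-β) for x ≤ -β
  have hmono : ∀ x : ℝ, x ≤ -β → f x ≤ f (-β) := by
    intro x hx
    rw [hfeq, hfeq]
    apply mul_le_mul_of_nonneg_left _ (inv_nonneg.mpr (Real.sqrt_nonneg _))
    apply Real.exp_le_exp.mpr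
    apply (div_le_div_iff_of_pos_right (by positivity)).mpr
    nlinarith [sq_nonneg (x + β)]
  -- measure as integral
  have hmeas : ∀ s : Set ℝ, ((gaussianReal 0 v) s).toReal = ∫ x in s, f x := by
    intro s
    rw [gaussianReal_apply_eq_integral 0 hv0 s, ENNReal.toReal_ofReal]
    exact integral_nonneg fun x => hfnn x
  set T : ℝ := ∫ x in Iic (-β), f x with hT
  have hTnn : 0 ≤ T := setIntegral_nonneg measurableSet_Iic fun x _ => hfnn x
  -- the FTC step
  have hg'int : IntegrableOn (fun x : ℝ => -(1 + σ ^ 2 / x ^ 2) * f x) (Iic (-β)) := by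
    apply Integrable.mono (hfint.const_mul (1 + σ ^ 2 / β ^ 2)).restrict
    · apply Measurable.aestronglyMeasurable
      exact ((measurable_const.add (measurable_const.div (measurable_id.pow_const 2))).neg.mul
        (measurable_gaussianPDFReal 0 v))
    · rw [ae_restrict_iff' measurableSet_Iic]
      refine ae_of_all _ fun x hx => ?_
      simp only [mem_Iic] at hx
      have hx2 : β ^ 2 ≤ x ^ 2 := by nlinarith
      have h1 : σ ^ 2 / x ^ 2 ≤ σ ^ 2 / β ^ 2 :=
        div_le_div_of_nonneg_left hσ2.le (by positivity) hx2
      have h0 : (0:ℝ) ≤ 1 + σ ^ 2 / x ^ 2 :=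
        add_nonneg zero_le_one (div_nonneg hσ2.le (sq_nonneg x))
      calc ‖-(1 + σ ^ 2 / x ^ 2) * f x‖ = (1 + σ ^ 2 / x ^ 2) * f x := by
            rw [norm_mul, norm_neg, Real.norm_eq_abs, Real.norm_eq_abs,
              abs_of_nonneg h0, abs_of_nonneg (hfnn x)]
        _ ≤ (1 + σ ^ 2 / β ^ 2) * f x :=
            mul_le_mul_of_nonneg_right (by linarith) (hfnn x)
        _ ≤ ‖(1 + σ ^ 2 / β ^ 2) * f x‖ := le_abs_self _
  -- FTC
  have hftc : ∫ x in Iic (-β), -(1 + σ ^ 2 / x ^ 2) * f x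
      = σ ^ 2 * (-β)⁻¹ * f (-β) - 0 := by
    apply integral_Iic_of_hasDerivAt_of_tendsto' (f := fun t => σ ^ 2 * t⁻¹ * f t)
    · intro x hx
      simp only [mem_Iic] at hx
      have hx0 : x ≠ 0 := by intro h; rw [h] at hx; linarith
      simpa only [hfeq] using aux_hasDerivAt σ hσ hx0
    · exact hg'int
    · -- tendsto 0 at bot
      have hinv : Tendsto (fun t : ℝ => t⁻¹) atBot (nhds 0) := by
        have h : Tendsto (fun x : ℝ => ((-x)⁻¹ : ℝ)) atBot (nhds 0) :=
          tendsto_inv_atTop_zero.comp (tendsto_neg_atBot_atTop (G := ℝ))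
        have h2 := h.neg
        rw [neg_zero] at h2
        exact h2.congr fun x => by rw [inv_neg, neg_neg]
      have h1 : Tendsto (fun t : ℝ => σ ^ 2 * t⁻¹) atBot (nhds (σ ^ 2 * 0)) :=
        hinv.const_mul _
      have hsq : Tendsto (fun x : ℝ => (x - 0) ^ 2) atBot atTop := by
        have h := (tendsto_pow_atTop (two_ne_zero)).comp
          (tendsto_neg_atBot_atTop (G := ℝ))
        refine h.congr fun x => ?_
        simp [neg_sq]
      have h2 : Tendsto f atBot (nhds 0) := by
        have hcv : (0:ℝ) < 2 * (σ ^ 2) := by positivity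
        have hdiv : Tendsto (fun x : ℝ => -(x - 0) ^ 2 / (2 * σ ^ 2)) atBot atBot := by
          apply Tendsto.atBot_div_const hcv
          exact tendsto_neg_atTop_atBot.comp hsq
        have := Real.tendsto_exp_atBot.comp hdiv
        have h3 : Tendsto (fun x : ℝ => (Real.sqrt (2 * Real.pi * σ ^ 2))⁻¹ *
            Real.exp (-(x - 0) ^ 2 / (2 * σ ^ 2))) atBot
            (nhds ((Real.sqrt (2 * Real.pi * σ ^ 2))⁻¹ * 0)) := this.const_mul _
        rw [mul_zero] at h3
        exact h3.congr fun x => (hfeq x).symm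
      simpa using h1.mul h2
  -- rearrange FTC into the positive form
  have hpos_int : ∫ x in Iic (-β), (1 + σ ^ 2 / x ^ 2) * f x = σ ^ 2 / β * f (-β) := by
    have := hftc
    rw [sub_zero] at this
    have h2 : ∫ x in Iic (-β), (1 + σ ^ 2 / x ^ 2) * f x
        = -∫ x in Iic (-β), -(1 + σ ^ 2 / x ^ 2) * f x := by
      rw [← integral_neg]
      congr 1; funext x; ring
    rw [h2, this]
    field_simp
  -- compare with T
  have hcomp : σ ^ 2 / β * f (-β) ≤ (1 + σ ^ 2 / β ^ 2) * T := by
    rw [← hpos_int, hT, ← integral_const_mul]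
    have hpint : IntegrableOn (fun x : ℝ => (1 + σ ^ 2 / x ^ 2) * f x) (Iic (-β)) :=
      hg'int.neg.congr (ae_of_all _ fun x => by simp only [Pi.neg_apply]; ring)
    apply setIntegral_mono_on hpint ?meas measurableSet_Iic ?mono
    case meas =>
      exact (hfint.const_mul _).restrict
    case mono =>
      intro x hx
      simp only [mem_Iic] at hx
      have hx2 : β ^ 2 ≤ x ^ 2 := by nlinarith
      have h1 : σ ^ 2 / x ^ 2 ≤ σ ^ 2 / β ^ 2 :=
        div_le_div_of_nonneg_left hσ2.le (by positivity) hx2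
      exact mul_le_mul_of_nonneg_right (by linarith) (hfnn x)
  -- key bound
  have hkey : f (-β) ≤ (β / σ ^ 2 + 1 / β) * T := by
    have h := mul_le_mul_of_nonneg_left hcomp (le_of_lt (by positivity : (0:ℝ) < β / σ ^ 2))
    calc f (-β) = β / σ ^ 2 * (σ ^ 2 / β * f (-β)) := by field_simp
      _ ≤ β / σ ^ 2 * ((1 + σ ^ 2 / β ^ 2) * T) := h
      _ = (β / σ ^ 2 + 1 / β) * T := by field_simp
  have hkey2 : f (-β) ≤ (β / σ ^ 2 + 1 / β + 1 / (β * σ ^ 2) + 1 / β ^ 3) * T := by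
    refine hkey.trans (mul_le_mul_of_nonneg_right ?_ hTnn)
    have h1 : (0:ℝ) ≤ 1 / (β * σ ^ 2) := by positivity
    have h2 : (0:ℝ) ≤ 1 / β ^ 3 := by positivity
    linarith
  have hTmeas : ((gaussianReal 0 v) (Set.Iic (-β))).toReal = T := hmeas _
  constructor
  · rw [hTmeas, ← hfβ]; exact hkey2
  · intro a b hab hb
    rw [hTmeas, hmeas]
    have hint : ∫ x in Ioc a b, f x ≤ f (-β) * (b - a) := by
      calc ∫ x in Ioc a b, f x ≤ ∫ _x in Ioc a b, f (-β) := by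
            apply setIntegral_mono_on hfint.restrict (integrable_const _)
              measurableSet_Ioc
            intro x hx
            exact hmono x (hx.2.trans hb)
        _ = f (-β) * (b - a) := by
            rw [setIntegral_const, measureReal_def, Real.volume_Ioc, smul_eq_mul,
              ENNReal.toReal_ofReal (by linarith), mul_comm]
    refine hint.trans ?_
    exact mul_le_mul_of_nonneg_right hkey2 (by linarith)
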